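/- If H is a hypergraph of rank r ≥ 2 without isolated vertices, then γ(H) ≤ (r − 1)·α'(H). -/

import Mathlib

open Finset

variable {V : Type*} [DecidableEq V] [Fintype V]

/-- A set `D` dominates: every vertex outside `D` lies in an edge meeting `D`. -/
def isDominating (E : Finset (Finset V)) (D : Finset V) : Prop :=
  ∀ v : V, v ∉ D → ∃ e ∈ E, v ∈ e ∧ ∃ u ∈ e, u ∈ D

/-- Domination number. -/
noncomputable def domNum (E : Finset (Finset V)) : ℕ :=
  sInf {n | ∃ D : Finset V, isDominating E D ∧ D.card = n}

/-- A transversal meets every edge. -/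
def isTransversal (E : Finset (Finset V)) (T : Finset V) : Prop :=
  ∀ e ∈ E, ∃ v ∈ e, v ∈ T

/-- Transversal number. -/
noncomputable def tauNum (E : Finset (Finset V)) : ℕ :=
  sInf {n | ∃ T : Finset V, isTransversal E T ∧ T.card = n}

/-- A matching: a set of pairwise disjoint edges of `E`. -/
def isMatching (E M : Finset (Finset V)) : Prop :=
  M ⊆ E ∧ ∀ e ∈ M, ∀ f ∈ M, e ≠ f → e ∩ f = ∅

/-- Matching number. -/
noncomputable def matchNum (E : Finset (Finset V)) : ℕ :=
  sSup {n | ∃ M : Finset (Finset V), isMatching E M ∧ M.card = n}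

/-- Intersecting: any two edges meet. -/
def Intersecting (E : Finset (Finset V)) : Prop :=
  ∀ e ∈ E, ∀ f ∈ E, (e ∩ f).Nonempty

/-- Linear: any two distinct edges meet in at most one vertex. -/
def Linear (E : Finset (Finset V)) : Prop :=
  ∀ e ∈ E, ∀ f ∈ E, e ≠ f → (e ∩ f).card ≤ 1

/-- No isolated vertices: every vertex lies in some edge. -/
def NoIsolated (E : Finset (Finset V)) : Prop :=
  ∀ v : V, ∃ e ∈ E, v ∈ e

/-- Degree of a vertex. -/
def degree (E : Finset (Finset V)) (v : V) : ℕ :=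
  (E.filter (fun e => v ∈ e)).card

/-- Maximum degree. -/
def maxDegree (E : Finset (Finset V)) : ℕ :=
  Finset.univ.sup (fun v => degree E v)

/-- Quasidegree: max number of edges containing `v` pairwise intersecting exactly in `{v}`. -/
noncomputable def quasidegree (E : Finset (Finset V)) (v : V) : ℕ :=
  sSup {n | ∃ S : Finset (Finset V), S ⊆ E ∧ S.card = n ∧ (∀ e ∈ S, v ∈ e) ∧
    ∀ e ∈ S, ∀ f ∈ S, e ≠ f → e ∩ f = {v}}

lemma matchSet_bdd (E : Finset (Finset V)) :
    BddAbove {n | ∃ M : Finset (Finset V), isMatching E M ∧ M.card = n} := by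
  refine ⟨E.card, ?_⟩
  rintro n ⟨M, hM, rfl⟩
  exact card_le_card hM.1

lemma exists_max_matching (E : Finset (Finset V)) :
    ∃ M : Finset (Finset V), isMatching E M ∧ M.card = matchNum E := by
  have h0 : (0 : ℕ) ∈ {n | ∃ M : Finset (Finset V), isMatching E M ∧ M.card = n} :=
    ⟨∅, ⟨empty_subset _, fun e he => absurd he (notMem_empty _)⟩, card_empty⟩
  exact Nat.sSup_mem ⟨0, h0⟩ (matchSet_bdd E)

lemma matchNum_step (E : Finset (Finset V)) (e : Finset V) (he : e ∈ E)
    (hne : e.Nonempty) :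
    matchNum (E.filter (fun f => f ∩ e = ∅)) + 1 ≤ matchNum E := by
  obtain ⟨M, hM, hc⟩ := exists_max_matching (E.filter (fun f => f ∩ e = ∅))
  have heM : e ∉ M := by
    intro h
    have h2 := (mem_filter.1 (hM.1 h)).2
    rw [inter_self] at h2
    rw [h2] at hne
    exact not_nonempty_empty hne
  have hmatch : isMatching E (insert e M) := by
    constructor
    · intro f hf
      rcases mem_insert.1 hf with rfl | hf
      · exact he
      · exact (mem_filter.1 (hM.1 hf)).1
    · intro f hf g hg hfg
      rcases mem_insert.1 hf with hfe | hf <;> rcases mem_insert.1 hg with hge | hg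
      · exact absurd (hfe.trans hge.symm) hfg
      · rw [hfe, inter_comm]; exact (mem_filter.1 (hM.1 hg)).2
      · rw [hge]; exact (mem_filter.1 (hM.1 hf)).2
      · exact hM.2 f hf g hg hfg
  have : (insert e M).card ∈ {n | ∃ M : Finset (Finset V), isMatching E M ∧ M.card = n} :=
    ⟨insert e M, hmatch, rfl⟩
  have hle := le_csSup (matchSet_bdd E) this
  rw [card_insert_of_notMem heM, hc] at hle
  exact hle

lemma key_dom (r : ℕ) : ∀ (n : ℕ) (E : Finset (Finset V)), E.card ≤ n →
    (∀ e ∈ E, 2 ≤ e.card ∧ e.card ≤ r) →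
    ∃ D : Finset V, D.card ≤ (r - 1) * matchNum E ∧
      ∀ v : V, (∃ f ∈ E, v ∈ f) → v ∉ D → ∃ f ∈ E, v ∈ f ∧ ∃ u ∈ f, u ∈ D := by
  intro n
  induction n with
  | zero =>
    intro E hE _
    have hE0 : E = ∅ := card_eq_zero.1 (Nat.le_zero.1 hE)
    subst hE0
    exact ⟨∅, by simp, fun v ⟨f, hf, _⟩ _ => absurd hf (notMem_empty _)⟩
  | succ n ih =>
    intro E hE hrank
    rcases eq_empty_or_nonempty E with rfl | ⟨e0, he0⟩
    · exact ⟨∅, by simp, fun v ⟨f, hf, _⟩ _ => absurd hf (notMem_empty _)⟩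
    obtain ⟨x0, hx0⟩ : e0.Nonempty := card_pos.1 (by have := (hrank e0 he0).1; omega)
    -- find a good pair (e, x)
    have hgoodpair : ∃ e ∈ E, ∃ x ∈ e,
        ∀ v, v ∉ e → (∃ f ∈ E, v ∈ f) → ∃ g ∈ E, v ∈ g ∧ g ∩ e ≠ {x} := by
      by_cases h : ∃ v, v ∉ e0 ∧ (∃ f ∈ E, v ∈ f) ∧ ∀ f ∈ E, v ∈ f → f ∩ e0 = {x0}
      · obtain ⟨v, hv0, ⟨f0, hf0E, hvf0⟩, hvall⟩ := h
        refine ⟨f0, hf0E, v, hvf0, ?_⟩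
        rintro v' hv' ⟨g, hgE, hv'g⟩
        refine ⟨g, hgE, hv'g, ?_⟩
        intro hcon
        have hvg : v ∈ g := by
          have h1 : v ∈ g ∩ f0 := by rw [hcon]; exact mem_singleton_self v
          exact (mem_inter.1 h1).1
        have hge0 := hvall g hgE hvg
        have hx0f0 : x0 ∈ f0 := by
          have h2 := hvall f0 hf0E hvf0
          have h3 : x0 ∈ f0 ∩ e0 := by rw [h2]; exact mem_singleton_self x0
          exact (mem_inter.1 h3).1
        have hx0g : x0 ∈ g := by
          have h4 : x0 ∈ g ∩ e0 := by rw [hge0]; exact mem_singleton_self x0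
          exact (mem_inter.1 h4).1
        have h5 : x0 ∈ g ∩ f0 := mem_inter.2 ⟨hx0g, hx0f0⟩
        rw [hcon, mem_singleton] at h5
        rw [h5] at hx0
        exact hv0 hx0
      · push_neg at h
        refine ⟨e0, he0, x0, hx0, ?_⟩
        intro v hv hex
        obtain ⟨g, hgE, hvg, hgne⟩ := h v hv hex
        exact ⟨g, hgE, hvg, hgne⟩
    obtain ⟨e, heE, x, hxe, hgood⟩ := hgoodpair
    have hecard := (hrank e heE).1
    set E' := E.filter (fun f => f ∩ e = ∅) with hE'def
    have heE' : e ∉ E' := by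
      intro h
      have h2 := (mem_filter.1 h).2
      rw [inter_self] at h2
      rw [h2] at hecard
      simp at hecard
    have hcard' : E'.card ≤ n := by
      have h1 : E' ⊆ E := filter_subset _ _
      have h2 : E'.card < E.card := card_lt_card ⟨h1, fun hsub => heE' (hsub heE)⟩
      omega
    obtain ⟨D', hD'card, hD'dom⟩ := ih E' hcard'
      (fun f hf => hrank f (filter_subset _ _ hf))
    refine ⟨D' ∪ e.erase x, ?_, ?_⟩
    · have h1 : (D' ∪ e.erase x).card ≤ D'.card + (e.erase x).card := card_union_le _ _
      have h2 : (e.erase x).card = e.card - 1 := card_erase_of_mem hxe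
      have h3 : (e.erase x).card ≤ r - 1 := by
        rw [h2]; exact Nat.sub_le_sub_right (hrank e heE).2 1
      have h4 := matchNum_step E e heE ⟨x, hxe⟩
      calc (D' ∪ e.erase x).card ≤ D'.card + (e.erase x).card := h1
        _ ≤ (r - 1) * matchNum E' + (r - 1) := Nat.add_le_add hD'card h3
        _ = (r - 1) * (matchNum E' + 1) := by ring
        _ ≤ (r - 1) * matchNum E := Nat.mul_le_mul_left _ h4
    · intro v hv hvD
      by_cases hve : v ∈ e
      · by_cases hvx : v = x
        · subst hvx
          obtain ⟨y, hy, hyne⟩ := exists_mem_ne (show 1 < e.card by omega) v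
          exact ⟨e, heE, hve, y, hy, mem_union_right _ (mem_erase.2 ⟨hyne, hy⟩)⟩
        · exact absurd (mem_union_right D' (mem_erase.2 ⟨hvx, hve⟩)) hvD
      · obtain ⟨g, hgE, hvg, hgne⟩ := hgood v hve hv
        by_cases hge : g ∩ e = ∅
        · have hgE' : g ∈ E' := mem_filter.2 ⟨hgE, hge⟩
          by_cases hvD' : v ∈ D'
          · exact absurd (mem_union_left _ hvD') hvD
          · obtain ⟨f, hfE', hvf, u, huf, huD'⟩ := hD'dom v ⟨g, hgE', hvg⟩ hvD'
            exact ⟨f, filter_subset _ _ hfE', hvf, u, huf, mem_union_left _ huD'⟩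
        · obtain ⟨y, hy⟩ := nonempty_iff_ne_empty.2 hge
          have hyne : ∃ y ∈ g ∩ e, y ≠ x := by
            by_contra hcon
            push_neg at hcon
            apply hgne
            apply Finset.Subset.antisymm
            · intro z hz; rw [mem_singleton]; exact hcon z hz
            · intro z hz
              rw [mem_singleton] at hz
              subst hz
              have := hcon y hy
              rwa [← this]
          obtain ⟨y', hy', hy'ne⟩ := hyne
          have hy'e := mem_inter.1 hy'
          exact ⟨g, hgE, hvg, y', hy'e.1,
            mem_union_right _ (mem_erase.2 ⟨hy'ne, hy'e.2⟩)⟩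

theorem stmt_4 (E : Finset (Finset V)) (r : ℕ) (hr : 2 ≤ r)
    (hrank : ∀ e ∈ E, 2 ≤ e.card ∧ e.card ≤ r)
    (hni : NoIsolated E) :
    domNum E ≤ (r - 1) * matchNum E := by
  obtain ⟨D, hDcard, hDdom⟩ := key_dom r E.card E le_rfl hrank
  have hdom : isDominating E D := by
    intro v hvD
    exact hDdom v (hni v) hvD
  have h1 : domNum E ≤ D.card := Nat.sInf_le ⟨D, hdom, rfl⟩
  exact h1.trans hDcard
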